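/- Let X, Y ∈ ℍ^{M×N} admit QSVDs with singular values x : Fin (min M N) → ℝ and y : Fin (min M N) → ℝ respectively. Then Re(tr(Yᴴ * X)) ≤ Σ_{i=1}^{min(M,N)} (x i)·(y i), where tr denotes the quaternion trace and Re the real part of a quaternion (the quaternionic von Neumann trace inequality). -/

import Mathlib

noncomputable section

open Matrix Finset

abbrev ℍ : Type := Quaternion ℝ

/-- The `M × N` rectangular diagonal quaternion matrix of `σ : Fin K → ℝ`:
entry `(i, j)` is `σ i` when `i` and `j` have equal numerical index (below `K`), else `0`. -/
def rectDiag (M N : ℕ) {K : ℕ} (σ : Fin K → ℝ) : Matrix (Fin M) (Fin N) ℍ :=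
  Matrix.of fun i j =>
    if h : (i : ℕ) = (j : ℕ) ∧ (i : ℕ) < K then ((σ ⟨i, h.2⟩ : ℝ) : ℍ) else 0

/-- A square quaternion matrix is unitary if `A * Aᴴ = Aᴴ * A = 1`. -/
def IsUnitary {n : ℕ} (A : Matrix (Fin n) (Fin n) ℍ) : Prop :=
  A * Aᴴ = 1 ∧ Aᴴ * A = 1

/-- `IsQSVD A U σ V` : `A = U * D * Vᴴ` is a quaternion singular value decomposition of `A`,
with `U`, `V` unitary and `σ` a nonincreasing nonnegative family of singular values. -/
def IsQSVD {M N : ℕ} (A : Matrix (Fin M) (Fin N) ℍ)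
    (U : Matrix (Fin M) (Fin M) ℍ) (σ : Fin (min M N) → ℝ)
    (V : Matrix (Fin N) (Fin N) ℍ) : Prop :=
  IsUnitary U ∧ IsUnitary V ∧ Antitone σ ∧ (∀ i, 0 ≤ σ i) ∧
    A = U * rectDiag M N σ * Vᴴ

/-- `A` admits a QSVD with singular values `σ`. -/
def HasQSVD {M N : ℕ} (A : Matrix (Fin M) (Fin N) ℍ) (σ : Fin (min M N) → ℝ) : Prop :=
  ∃ U V, IsQSVD A U σ V


lemma tele (f : ℕ → ℝ) {j K : ℕ} (h : j ≤ K) :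
    ∑ k ∈ Finset.Ico j K, (f k - f (k+1)) = f j - f K := by
  rw [Finset.sum_Ico_eq_sum_range]
  have := Finset.sum_range_sub' (fun k => f (j + k)) (K - j)
  simp only [Nat.add_zero] at this
  rw [Nat.add_sub_cancel' h] at this
  rw [← this]
  apply Finset.sum_congr rfl
  intro k _
  rw [Nat.add_assoc]

lemma ind_sum (K l k : ℕ) (hl : l < K) (hk : k < K) :
    ∑ i ∈ range K, (if i ≤ l then (1:ℝ) else 0) * (if i ≤ k then 1 else 0)
      = (min l k : ℕ) + 1 := by
  have h1 : ∀ i, (if i ≤ l then (1:ℝ) else 0) * (if i ≤ k then 1 else 0)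
      = if i ≤ min l k then 1 else 0 := by
    intro i; by_cases h1 : i ≤ l <;> by_cases h2 : i ≤ k <;> simp [h1, h2] <;> omega
  have hfil : (range K).filter (fun i => i ≤ min l k) = range (min l k + 1) := by
    ext i; simp [Nat.lt_succ_iff]; omega
  simp_rw [h1]
  rw [← Finset.sum_filter, hfil, Finset.sum_const, Finset.card_range]
  simp [nsmul_eq_mul]

lemma ind_sum1 (K l : ℕ) (hl : l < K) :
    ∑ i ∈ range K, (if i ≤ l then (1:ℝ) else 0) = l + 1 := by
  have := ind_sum K l l hl hl
  simp only [min_self] at this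
  rw [← this]
  apply Finset.sum_congr rfl
  intro i _
  by_cases h : i ≤ l <;> simp [h]

lemma sum4_swap (s t : Finset ℕ) (F : ℕ → ℕ → ℕ → ℕ → ℝ) :
    ∑ i ∈ s, ∑ j ∈ s, ∑ l ∈ t, ∑ k ∈ t, F i j l k
      = ∑ l ∈ t, ∑ k ∈ t, ∑ i ∈ s, ∑ j ∈ s, F i j l k := by
  have swap : ∀ (u v : Finset ℕ) (G : ℕ → ℕ → ℝ),
      (∑ a ∈ u, ∑ b ∈ v, G a b) = ∑ b ∈ v, ∑ a ∈ u, G a b := fun u v G => Finset.sum_comm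
  calc ∑ i ∈ s, ∑ j ∈ s, ∑ l ∈ t, ∑ k ∈ t, F i j l k
      = ∑ i ∈ s, ∑ l ∈ t, ∑ j ∈ s, ∑ k ∈ t, F i j l k :=
        Finset.sum_congr rfl fun i _ => swap s t _
    _ = ∑ l ∈ t, ∑ i ∈ s, ∑ j ∈ s, ∑ k ∈ t, F i j l k := swap s t _
    _ = ∑ l ∈ t, ∑ i ∈ s, ∑ k ∈ t, ∑ j ∈ s, F i j l k :=
        Finset.sum_congr rfl fun l _ => Finset.sum_congr rfl fun i _ => swap s t _
    _ = ∑ l ∈ t, ∑ k ∈ t, ∑ i ∈ s, ∑ j ∈ s, F i j l k :=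
        Finset.sum_congr rfl fun l _ => swap s t _

lemma sum3_swap (s t : Finset ℕ) (F : ℕ → ℕ → ℕ → ℝ) :
    ∑ i ∈ s, ∑ k ∈ t, ∑ l ∈ t, F i k l
      = ∑ l ∈ t, ∑ k ∈ t, ∑ i ∈ s, F i k l := by
  have swap : ∀ (u v : Finset ℕ) (G : ℕ → ℕ → ℝ),
      (∑ a ∈ u, ∑ b ∈ v, G a b) = ∑ b ∈ v, ∑ a ∈ u, G a b := fun u v G => Finset.sum_comm
  calc ∑ i ∈ s, ∑ k ∈ t, ∑ l ∈ t, F i k l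
      = ∑ i ∈ s, ∑ l ∈ t, ∑ k ∈ t, F i k l :=
        Finset.sum_congr rfl fun i _ => swap t t _
    _ = ∑ l ∈ t, ∑ i ∈ s, ∑ k ∈ t, F i k l := swap s t _
    _ = ∑ l ∈ t, ∑ k ∈ t, ∑ i ∈ s, F i k l :=
        Finset.sum_congr rfl fun l _ => swap s t _

lemma substochastic_sum_le (K : ℕ) (x y : ℕ → ℝ)
    (hx : Antitone x) (hy : Antitone y) (hxK : x K = 0) (hyK : y K = 0)
    (S : ℕ → ℕ → ℝ) (hS : ∀ i j, 0 ≤ S i j)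
    (hrow : ∀ i, i < K → ∑ j ∈ range K, S i j ≤ 1)
    (hcol : ∀ j, j < K → ∑ i ∈ range K, S i j ≤ 1) :
    ∑ i ∈ range K, ∑ j ∈ range K, y i * x j * S i j ≤ ∑ i ∈ range K, x i * y i := by
  classical
  set d : ℕ → ℝ := fun k => x k - x (k+1) with hd
  set e : ℕ → ℝ := fun l => y l - y (l+1) with he
  have hd0 : ∀ k, 0 ≤ d k := fun k => sub_nonneg.2 (hx (Nat.le_succ k))
  have he0 : ∀ l, 0 ≤ e l := fun l => sub_nonneg.2 (hy (Nat.le_succ l))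
  have hIco : ∀ j : ℕ, j < K → Finset.Ico j K = (range K).filter (fun k => j ≤ k) := by
    intro j hj; ext a; simp [Finset.mem_Ico]; omega
  have hrep : ∀ (f : ℕ → ℝ), f K = 0 → ∀ j, j < K →
      f j = ∑ k ∈ range K, (if j ≤ k then (1:ℝ) else 0) * (f k - f (k+1)) := by
    intro f hfK j hj
    have h1 : f j = ∑ k ∈ Finset.Ico j K, (f k - f (k+1)) := by
      rw [tele f hj.le, hfK, sub_zero]
    rw [h1, hIco j hj, Finset.sum_filter]
    apply Finset.sum_congr rfl
    intro k _
    by_cases h : j ≤ k <;> simp [h]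
  -- T l k
  set T : ℕ → ℕ → ℝ := fun l k => ∑ i ∈ range K, ∑ j ∈ range K,
      ((if i ≤ l then (1:ℝ) else 0) * (if j ≤ k then (1:ℝ) else 0)) * S i j with hT
  have hTle : ∀ l k, l < K → k < K → T l k ≤ (min l k : ℕ) + 1 := by
    intro l k hl hk
    have h1 : T l k ≤ l + 1 := by
      have hb : ∀ i ∈ range K, ∑ j ∈ range K,
          ((if i ≤ l then (1:ℝ) else 0) * (if j ≤ k then (1:ℝ) else 0)) * S i j
            ≤ (if i ≤ l then (1:ℝ) else 0) := by
        intro i hi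
        have hi' : i < K := Finset.mem_range.1 hi
        by_cases h : i ≤ l
        · simp only [h, if_true, one_mul]
          calc ∑ j ∈ range K, (if j ≤ k then (1:ℝ) else 0) * S i j
              ≤ ∑ j ∈ range K, S i j := by
                apply Finset.sum_le_sum
                intro j _
                by_cases h2 : j ≤ k <;> simp [h2, hS i j]
            _ ≤ 1 := hrow i hi'
        · simp only [h, if_false, zero_mul]
          simp [Finset.sum_const_zero]
      calc T l k ≤ ∑ i ∈ range K, (if i ≤ l then (1:ℝ) else 0) := Finset.sum_le_sum hb
        _ = l + 1 := ind_sum1 K l hl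
    have h2 : T l k ≤ k + 1 := by
      have hswap : T l k = ∑ j ∈ range K, ∑ i ∈ range K,
          ((if i ≤ l then (1:ℝ) else 0) * (if j ≤ k then (1:ℝ) else 0)) * S i j :=
        Finset.sum_comm
      rw [hswap]
      have hb : ∀ j ∈ range K, ∑ i ∈ range K,
          ((if i ≤ l then (1:ℝ) else 0) * (if j ≤ k then (1:ℝ) else 0)) * S i j
            ≤ (if j ≤ k then (1:ℝ) else 0) := by
        intro j hj
        have hj' : j < K := Finset.mem_range.1 hj
        by_cases h : j ≤ k
        · simp only [h, if_true, mul_one]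
          calc ∑ i ∈ range K, (if i ≤ l then (1:ℝ) else 0) * S i j
              ≤ ∑ i ∈ range K, S i j := by
                apply Finset.sum_le_sum
                intro i _
                by_cases h2 : i ≤ l <;> simp [h2, hS i j]
            _ ≤ 1 := hcol j hj'
        · simp only [h, if_false, mul_zero, zero_mul]
          simp
      calc _ ≤ ∑ j ∈ range K, (if j ≤ k then (1:ℝ) else 0) := Finset.sum_le_sum hb
        _ = k + 1 := ind_sum1 K k hk
    have : ((min l k : ℕ) : ℝ) + 1 = min ((l:ℝ)+1) ((k:ℝ)+1) := by
      rcases le_total l k with h | h <;> simp [min_eq_left, min_eq_right, h, Nat.cast_le] <;> push_cast <;> omega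
    rw [this]
    exact le_min h1 h2
  -- LHS = ∑_l ∑_k e l * d k * T l k
  have hLHS : ∑ i ∈ range K, ∑ j ∈ range K, y i * x j * S i j
      = ∑ l ∈ range K, ∑ k ∈ range K, e l * d k * T l k := by
    have step1 : ∑ i ∈ range K, ∑ j ∈ range K, y i * x j * S i j
        = ∑ i ∈ range K, ∑ j ∈ range K, ∑ l ∈ range K, ∑ k ∈ range K,
            ((if i ≤ l then (1:ℝ) else 0) * e l) * (((if j ≤ k then (1:ℝ) else 0) * d k) * S i j) := by
      apply Finset.sum_congr rfl
      intro i hi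
      apply Finset.sum_congr rfl
      intro j hj
      rw [hrep y hyK i (Finset.mem_range.1 hi), hrep x hxK j (Finset.mem_range.1 hj)]
      rw [Finset.sum_mul_sum, Finset.sum_mul]
      apply Finset.sum_congr rfl
      intro l _
      rw [Finset.sum_mul]
      apply Finset.sum_congr rfl
      intro k _
      ring
    rw [step1, sum4_swap]
    apply Finset.sum_congr rfl
    intro l _
    apply Finset.sum_congr rfl
    intro k _
    rw [hT]
    simp only
    rw [Finset.mul_sum]
    apply Finset.sum_congr rfl
    intro i _
    rw [Finset.mul_sum]
    apply Finset.sum_congr rfl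
    intro j _
    ring
  -- RHS = ∑_l ∑_k e l * d k * (min l k + 1)
  have hRHS : ∑ i ∈ range K, x i * y i
      = ∑ l ∈ range K, ∑ k ∈ range K, e l * d k * ((min l k : ℕ) + 1) := by
    have step1 : ∑ i ∈ range K, x i * y i
        = ∑ i ∈ range K, ∑ k ∈ range K, ∑ l ∈ range K,
            ((if i ≤ k then (1:ℝ) else 0) * d k) * ((if i ≤ l then (1:ℝ) else 0) * e l) := by
      apply Finset.sum_congr rfl
      intro i hi
      rw [hrep x hxK i (Finset.mem_range.1 hi), hrep y hyK i (Finset.mem_range.1 hi)]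
      rw [Finset.sum_mul_sum]
    rw [step1, sum3_swap]
    apply Finset.sum_congr rfl
    intro l hl
    apply Finset.sum_congr rfl
    intro k hk
    have : ∑ i ∈ range K, ((if i ≤ k then (1:ℝ) else 0) * d k) * ((if i ≤ l then (1:ℝ) else 0) * e l)
        = (e l * d k) * ∑ i ∈ range K, (if i ≤ l then (1:ℝ) else 0) * (if i ≤ k then (1:ℝ) else 0) := by
      rw [Finset.mul_sum]
      apply Finset.sum_congr rfl
      intro i _
      ring
    rw [this, ind_sum K l k (Finset.mem_range.1 hl) (Finset.mem_range.1 hk)]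
  rw [hLHS, hRHS]
  apply Finset.sum_le_sum
  intro l hl
  apply Finset.sum_le_sum
  intro k hk
  exact mul_le_mul_of_nonneg_left
    (hTle l k (Finset.mem_range.1 hl) (Finset.mem_range.1 hk))
    (mul_nonneg (he0 l) (hd0 k))

lemma re_mul_comm (a b : ℍ) : (a*b).re = (b*a).re := by
  simp [Quaternion.re_mul]; ring

lemma re_sum {α : Type*} (s : Finset α) (f : α → ℍ) :
    (∑ i ∈ s, f i).re = ∑ i ∈ s, (f i).re := by
  classical
  induction s using Finset.induction with
  | empty => simp [Quaternion.re_zero]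
  | insert _ _ h ih => simp [Finset.sum_insert h, ih]

lemma re_le_norm (a : ℍ) : a.re ≤ ‖a‖ := by
  have h1 := Quaternion.normSq_eq_norm_mul_self a
  have h2 : Quaternion.normSq a = a.re^2 + a.imI^2 + a.imJ^2 + a.imK^2 :=
    Quaternion.normSq_def' a
  nlinarith [norm_nonneg a, sq_nonneg a.imI, sq_nonneg a.imJ,
    sq_nonneg a.imK, sq_nonneg (a.re - ‖a‖)]

lemma re_mul_le (a b : ℍ) :
    (a*b).re ≤ (Quaternion.normSq a + Quaternion.normSq b)/2 := by
  have h1 : (a*b).re ≤ ‖a‖ * ‖b‖ := by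
    have := re_le_norm (a*b)
    rwa [norm_mul] at this
  have h2 := Quaternion.normSq_eq_norm_mul_self a
  have h3 := Quaternion.normSq_eq_norm_mul_self b
  nlinarith [mul_self_nonneg (‖a‖ - ‖b‖)]

lemma coe_mul_re (r : ℝ) (q : ℍ) : ((r:ℍ) * q).re = r * q.re := by
  rw [Quaternion.coe_mul_eq_smul]
  simp

lemma re_trace_mul_comm {m n : ℕ} (A : Matrix (Fin m) (Fin n) ℍ) (B : Matrix (Fin n) (Fin m) ℍ) :
    (Matrix.trace (A*B)).re = (Matrix.trace (B*A)).re := by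
  simp only [Matrix.trace, Matrix.diag, Matrix.mul_apply]
  rw [re_sum, re_sum]
  simp_rw [re_sum]
  rw [Finset.sum_comm]
  exact Finset.sum_congr rfl fun j _ => Finset.sum_congr rfl fun i _ => re_mul_comm _ _

lemma unitary_row_sum {n : ℕ} {A : Matrix (Fin n) (Fin n) ℍ} (hA : IsUnitary A) (i : Fin n) :
    ∑ j, Quaternion.normSq (A i j) = 1 := by
  have h := congrFun (congrFun hA.1 i) i
  rw [Matrix.mul_apply] at h
  simp only [Matrix.conjTranspose_apply] at h
  have h2 : (∑ j, A i j * star (A i j)).re = ((1 : Matrix (Fin n) (Fin n) ℍ) i i).re := by rw [h]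
  rw [re_sum] at h2
  simp only [Quaternion.self_mul_star, Quaternion.re_coe] at h2
  rw [Matrix.one_apply_eq] at h2
  simpa [Quaternion.re_one] using h2

lemma unitary_col_sum {n : ℕ} {A : Matrix (Fin n) (Fin n) ℍ} (hA : IsUnitary A) (j : Fin n) :
    ∑ i, Quaternion.normSq (A i j) = 1 := by
  have h := congrFun (congrFun hA.2 j) j
  rw [Matrix.mul_apply] at h
  simp only [Matrix.conjTranspose_apply] at h
  have h2 : (∑ i, star (A i j) * A i j).re = ((1 : Matrix (Fin n) (Fin n) ℍ) j j).re := by rw [h]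
  rw [re_sum] at h2
  simp only [Quaternion.star_mul_self, Quaternion.re_coe] at h2
  rw [Matrix.one_apply_eq] at h2
  simpa [Quaternion.re_one] using h2

lemma star_rectDiag {M N K : ℕ} (σ : Fin K → ℝ) (m : Fin M) (l : Fin N) :
    star (rectDiag M N σ m l) = rectDiag M N σ m l := by
  unfold rectDiag
  simp only [Matrix.of_apply]
  split_ifs with h
  · exact Quaternion.star_coe _
  · exact star_zero _

lemma rectDiag_commute {M N K : ℕ} (σ : Fin K → ℝ) (m : Fin M) (l : Fin N) (q : ℍ) :
    q * rectDiag M N σ m l = rectDiag M N σ m l * q := by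
  unfold rectDiag
  simp only [Matrix.of_apply]
  split_ifs with h
  · exact (Quaternion.coe_commutes _ _).symm
  · simp

lemma sum_rectDiag_mul {M N K : ℕ} (hKM : K ≤ M) (hKN : K ≤ N) (σ : Fin K → ℝ)
    (g : Fin M → Fin N → ℍ) :
    ∑ m : Fin M, ∑ l : Fin N, rectDiag M N σ m l * g m l
      = ∑ k : Fin K, (σ k : ℍ) * g (Fin.castLE hKM k) (Fin.castLE hKN k) := by
  classical
  have hinner : ∀ m : Fin M, (∑ l : Fin N, rectDiag M N σ m l * g m l)
      = if h : (m:ℕ) < K then (σ ⟨(m:ℕ), h⟩ : ℍ) * g m ⟨(m:ℕ), lt_of_lt_of_le h hKN⟩ else 0 := by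
    intro m
    by_cases h : (m:ℕ) < K
    · rw [dif_pos h]
      rw [Finset.sum_eq_single (⟨(m:ℕ), lt_of_lt_of_le h hKN⟩ : Fin N)]
      · congr 1
        simp [rectDiag, h]
      · intro l _ hne
        have hc : ¬((m:ℕ) = (l:ℕ)) := fun he => hne (Fin.ext he.symm)
        simp [rectDiag, hc]
      · intro h'
        exact absurd (Finset.mem_univ _) h'
    · rw [dif_neg h]
      apply Finset.sum_eq_zero
      intro l _
      simp [rectDiag, h]
  set F : ℕ → ℍ := fun nn => if h : nn < K ∧ nn < M ∧ nn < N then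
      (σ ⟨nn, h.1⟩ : ℍ) * g ⟨nn, h.2.1⟩ ⟨nn, h.2.2⟩ else 0 with hF
  have hL : ∀ m : Fin M, (∑ l : Fin N, rectDiag M N σ m l * g m l) = F (m:ℕ) := by
    intro m
    rw [hinner m]
    simp only [hF]
    split_ifs with h1 h2 h2
    · rfl
    · exact absurd ⟨h1, m.isLt, lt_of_lt_of_le h1 hKN⟩ h2
    · exact absurd h2.1 h1
    · rfl
  have hR : ∀ k : Fin K, (σ k : ℍ) * g (Fin.castLE hKM k) (Fin.castLE hKN k) = F (k:ℕ) := by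
    intro k
    simp only [hF]
    split_ifs with h
    · rfl
    · exact absurd ⟨k.isLt, lt_of_lt_of_le k.isLt hKM, lt_of_lt_of_le k.isLt hKN⟩ h
  calc ∑ m : Fin M, ∑ l : Fin N, rectDiag M N σ m l * g m l
      = ∑ m : Fin M, F (m:ℕ) := Finset.sum_congr rfl fun m _ => hL m
    _ = ∑ nn ∈ Finset.range M, F nn := Fin.sum_univ_eq_sum_range F M
    _ = ∑ nn ∈ Finset.range K, F nn := by
        refine (Finset.sum_subset (Finset.range_subset_range.2 hKM) ?_).symm
        intro nn _ hnn
        rw [Finset.mem_range, not_lt] at hnn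
        simp only [hF]
        exact dif_neg (fun hc => absurd hc.1 (not_lt.2 hnn))
    _ = ∑ k : Fin K, F (k:ℕ) := (Fin.sum_univ_eq_sum_range F K).symm
    _ = ∑ k : Fin K, (σ k : ℍ) * g (Fin.castLE hKM k) (Fin.castLE hKN k) :=
        Finset.sum_congr rfl fun k _ => (hR k).symm


/-- Quaternionic von Neumann trace inequality:
`Re(tr(Yᴴ * X)) ≤ ∑ᵢ σᵢ(X) σᵢ(Y)`. -/
theorem quaternion_von_neumann_trace_ineq {M N : ℕ}
    (X Y : Matrix (Fin M) (Fin N) ℍ) (x y : Fin (min M N) → ℝ)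
    (hX : HasQSVD X x) (hY : HasQSVD Y y) :
    (Matrix.trace (Yᴴ * X)).re ≤ ∑ i, x i * y i := by
  classical
  obtain ⟨U, V, hUu, hVu, hxa, hx0, hXeq⟩ := hX
  obtain ⟨P, Q, hPu, hQu, hya, hy0, hYeq⟩ := hY
  have hKM : min M N ≤ M := min_le_left M N
  have hKN : min M N ≤ N := min_le_right M N
  set A : Matrix (Fin M) (Fin M) ℍ := Pᴴ * U with hA
  set B : Matrix (Fin N) (Fin N) ℍ := Vᴴ * Q with hB
  have hAu : IsUnitary A := by
    constructor
    · rw [hA, Matrix.conjTranspose_mul, Matrix.conjTranspose_conjTranspose]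
      have h1 : Pᴴ * U * (Uᴴ * P) = Pᴴ * ((U * Uᴴ) * P) := by
        rw [Matrix.mul_assoc, ← Matrix.mul_assoc U]
      rw [h1, hUu.1, Matrix.one_mul, hPu.2]
    · rw [hA, Matrix.conjTranspose_mul, Matrix.conjTranspose_conjTranspose]
      have h1 : Uᴴ * P * (Pᴴ * U) = Uᴴ * ((P * Pᴴ) * U) := by
        rw [Matrix.mul_assoc, ← Matrix.mul_assoc P]
      rw [h1, hPu.1, Matrix.one_mul, hUu.2]
  have hBu : IsUnitary B := by
    constructor
    · rw [hB, Matrix.conjTranspose_mul, Matrix.conjTranspose_conjTranspose]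
      have h1 : Vᴴ * Q * (Qᴴ * V) = Vᴴ * ((Q * Qᴴ) * V) := by
        rw [Matrix.mul_assoc, ← Matrix.mul_assoc Q]
      rw [h1, hQu.1, Matrix.one_mul, hVu.2]
    · rw [hB, Matrix.conjTranspose_mul, Matrix.conjTranspose_conjTranspose]
      have h1 : Qᴴ * V * (Vᴴ * Q) = Qᴴ * ((V * Vᴴ) * Q) := by
        rw [Matrix.mul_assoc, ← Matrix.mul_assoc V]
      rw [h1, hVu.1, Matrix.one_mul, hQu.2]
  set W : Matrix (Fin M) (Fin N) ℍ := A * (rectDiag M N x * B) with hW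
  -- Step 1: trace identity
  have key : (Matrix.trace (Yᴴ * X)).re
      = ∑ k : Fin (min M N), ∑ k' : Fin (min M N),
          y k * (x k' * (A (Fin.castLE hKM k) (Fin.castLE hKM k')
            * B (Fin.castLE hKN k') (Fin.castLE hKN k)).re) := by
    have e1 : (Matrix.trace (Yᴴ * X)).re
        = (Matrix.trace ((rectDiag M N y)ᴴ * W)).re := by
      rw [hXeq, hYeq]
      rw [Matrix.conjTranspose_mul, Matrix.conjTranspose_mul,
        Matrix.conjTranspose_conjTranspose]
      have e0 : (Q * ((rectDiag M N y)ᴴ * Pᴴ)) * (U * rectDiag M N x * Vᴴ)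
          = Q * ((rectDiag M N y)ᴴ * (Pᴴ * (U * (rectDiag M N x * Vᴴ)))) := by
        simp only [Matrix.mul_assoc]
      rw [e0, re_trace_mul_comm]
      have e0' : ((rectDiag M N y)ᴴ * (Pᴴ * (U * (rectDiag M N x * Vᴴ)))) * Q
          = (rectDiag M N y)ᴴ * W := by
        rw [hW, hA, hB]
        simp only [Matrix.mul_assoc]
      rw [e0']
    have e2 : Matrix.trace ((rectDiag M N y)ᴴ * W)
        = ∑ k : Fin (min M N), (y k : ℍ) * W (Fin.castLE hKM k) (Fin.castLE hKN k) := by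
      simp only [Matrix.trace, Matrix.diag, Matrix.mul_apply, Matrix.conjTranspose_apply]
      rw [Finset.sum_comm]
      have h1 := sum_rectDiag_mul hKM hKN y (fun m l => W m l)
      rw [← h1]
      apply Finset.sum_congr rfl
      intro m _
      apply Finset.sum_congr rfl
      intro l _
      rw [star_rectDiag]
    have e3 : ∀ k : Fin (min M N), W (Fin.castLE hKM k) (Fin.castLE hKN k)
        = ∑ k' : Fin (min M N), (x k' : ℍ) * (A (Fin.castLE hKM k) (Fin.castLE hKM k')
            * B (Fin.castLE hKN k') (Fin.castLE hKN k)) := by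
      intro k
      rw [hW]
      show (A * (rectDiag M N x * B)) (Fin.castLE hKM k) (Fin.castLE hKN k) = _
      rw [Matrix.mul_apply]
      have h1 : ∀ n : Fin M, A (Fin.castLE hKM k) n * (rectDiag M N x * B) n (Fin.castLE hKN k)
          = ∑ p : Fin N, rectDiag M N x n p
              * (A (Fin.castLE hKM k) n * B p (Fin.castLE hKN k)) := by
        intro n
        rw [Matrix.mul_apply, Finset.mul_sum]
        apply Finset.sum_congr rfl
        intro p _
        calc A (Fin.castLE hKM k) n * (rectDiag M N x n p * B p (Fin.castLE hKN k))
            = (A (Fin.castLE hKM k) n * rectDiag M N x n p) * B p (Fin.castLE hKN k) :=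
              (mul_assoc _ _ _).symm
          _ = (rectDiag M N x n p * A (Fin.castLE hKM k) n) * B p (Fin.castLE hKN k) := by
              rw [rectDiag_commute]
          _ = rectDiag M N x n p * (A (Fin.castLE hKM k) n * B p (Fin.castLE hKN k)) :=
              mul_assoc _ _ _
      rw [Finset.sum_congr rfl (fun n _ => h1 n)]
      exact sum_rectDiag_mul hKM hKN x
        (fun n p => A (Fin.castLE hKM k) n * B p (Fin.castLE hKN k))
    rw [e1, e2, re_sum]
    apply Finset.sum_congr rfl
    intro k _
    rw [e3 k, Finset.mul_sum, re_sum]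
    apply Finset.sum_congr rfl
    intro k' _
    rw [coe_mul_re, coe_mul_re]
  -- Step 2: substochastic bound
  set x' : ℕ → ℝ := fun n => if h : n < min M N then x ⟨n, h⟩ else 0 with hx'
  set y' : ℕ → ℝ := fun n => if h : n < min M N then y ⟨n, h⟩ else 0 with hy'
  set S' : ℕ → ℕ → ℝ := fun i j => if h : i < min M N ∧ j < min M N then
      (Quaternion.normSq (A (Fin.castLE hKM ⟨i, h.1⟩) (Fin.castLE hKM ⟨j, h.2⟩))
        + Quaternion.normSq (B (Fin.castLE hKN ⟨j, h.2⟩) (Fin.castLE hKN ⟨i, h.1⟩))) / 2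
      else 0 with hS'
  have hx'v : ∀ k : Fin (min M N), x' (k : ℕ) = x k := by
    intro k
    simp only [hx']
    rw [dif_pos k.isLt]
  have hy'v : ∀ k : Fin (min M N), y' (k : ℕ) = y k := by
    intro k
    simp only [hy']
    rw [dif_pos k.isLt]
  have hS'v : ∀ k k' : Fin (min M N), S' (k : ℕ) (k' : ℕ)
      = (Quaternion.normSq (A (Fin.castLE hKM k) (Fin.castLE hKM k'))
        + Quaternion.normSq (B (Fin.castLE hKN k') (Fin.castLE hKN k))) / 2 := by
    intro k k'
    simp only [hS']
    rw [dif_pos ⟨k.isLt, k'.isLt⟩]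
  have hstep : (Matrix.trace (Yᴴ * X)).re
      ≤ ∑ i ∈ Finset.range (min M N), ∑ j ∈ Finset.range (min M N), y' i * x' j * S' i j := by
    rw [key]
    have hpt : ∀ k k' : Fin (min M N),
        y k * (x k' * (A (Fin.castLE hKM k) (Fin.castLE hKM k')
          * B (Fin.castLE hKN k') (Fin.castLE hKN k)).re)
        ≤ y' (k : ℕ) * x' (k' : ℕ) * S' (k : ℕ) (k' : ℕ) := by
      intro k k'
      rw [hx'v, hy'v, hS'v]
      calc y k * (x k' * (A (Fin.castLE hKM k) (Fin.castLE hKM k')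
            * B (Fin.castLE hKN k') (Fin.castLE hKN k)).re)
          ≤ y k * (x k' * ((Quaternion.normSq (A (Fin.castLE hKM k) (Fin.castLE hKM k'))
            + Quaternion.normSq (B (Fin.castLE hKN k') (Fin.castLE hKN k))) / 2)) := by
            apply mul_le_mul_of_nonneg_left _ (hy0 k)
            exact mul_le_mul_of_nonneg_left (re_mul_le _ _) (hx0 k')
        _ = y k * x k' * ((Quaternion.normSq (A (Fin.castLE hKM k) (Fin.castLE hKM k'))
            + Quaternion.normSq (B (Fin.castLE hKN k') (Fin.castLE hKN k))) / 2) := by ring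
    have hb : ∑ k : Fin (min M N), ∑ k' : Fin (min M N),
        y k * (x k' * (A (Fin.castLE hKM k) (Fin.castLE hKM k')
          * B (Fin.castLE hKN k') (Fin.castLE hKN k)).re)
        ≤ ∑ k : Fin (min M N), ∑ k' : Fin (min M N), y' (k:ℕ) * x' (k':ℕ) * S' (k:ℕ) (k':ℕ) := by
      apply Finset.sum_le_sum
      intro k _
      apply Finset.sum_le_sum
      intro k' _
      exact hpt k k'
    refine hb.trans (le_of_eq ?_)
    calc ∑ k : Fin (min M N), ∑ k' : Fin (min M N), y' (k:ℕ) * x' (k':ℕ) * S' (k:ℕ) (k':ℕ)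
        = ∑ k : Fin (min M N), ∑ j ∈ Finset.range (min M N), y' (k:ℕ) * x' j * S' (k:ℕ) j :=
          Finset.sum_congr rfl fun k _ =>
            Fin.sum_univ_eq_sum_range (fun j => y' (k:ℕ) * x' j * S' (k:ℕ) j) (min M N)
      _ = ∑ i ∈ Finset.range (min M N), ∑ j ∈ Finset.range (min M N), y' i * x' j * S' i j :=
          Fin.sum_univ_eq_sum_range
            (fun i => ∑ j ∈ Finset.range (min M N), y' i * x' j * S' i j) (min M N)
  have hx'anti : Antitone x' := by
    intro a b hab
    simp only [hx']
    split_ifs with h1 h2 h2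
    · exact hxa (Fin.mk_le_mk.2 hab)
    · exact absurd (lt_of_le_of_lt hab h1) h2
    · exact hx0 _
    · exact le_refl 0
  have hy'anti : Antitone y' := by
    intro a b hab
    simp only [hy']
    split_ifs with h1 h2 h2
    · exact hya (Fin.mk_le_mk.2 hab)
    · exact absurd (lt_of_le_of_lt hab h1) h2
    · exact hy0 _
    · exact le_refl 0
  have hx'K : x' (min M N) = 0 := by simp only [hx']; rw [dif_neg (lt_irrefl _)]
  have hy'K : y' (min M N) = 0 := by simp only [hy']; rw [dif_neg (lt_irrefl _)]
  have hS'0 : ∀ i j, 0 ≤ S' i j := by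
    intro i j
    simp only [hS']
    split_ifs with h
    · exact div_nonneg (add_nonneg (Quaternion.normSq_nonneg) (Quaternion.normSq_nonneg))
        (by norm_num)
    · exact le_refl 0
  have hAcast : ∀ (r : Fin M) (f : Fin M → ℝ), (∀ j, 0 ≤ f j) →
      ∑ j : Fin (min M N), f (Fin.castLE hKM j) ≤ ∑ j : Fin M, f j := by
    intro r f hf
    calc ∑ j : Fin (min M N), f (Fin.castLE hKM j)
        = ∑ j ∈ Finset.univ.map (Fin.castLEEmb hKM), f j := by
          rw [Finset.sum_map]
          rfl
      _ ≤ ∑ j : Fin M, f j :=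
          Finset.sum_le_sum_of_subset_of_nonneg (Finset.subset_univ _) fun j _ _ => hf j
  have hNcast : ∀ (f : Fin N → ℝ), (∀ j, 0 ≤ f j) →
      ∑ j : Fin (min M N), f (Fin.castLE hKN j) ≤ ∑ j : Fin N, f j := by
    intro f hf
    calc ∑ j : Fin (min M N), f (Fin.castLE hKN j)
        = ∑ j ∈ Finset.univ.map (Fin.castLEEmb hKN), f j := by
          rw [Finset.sum_map]
          rfl
      _ ≤ ∑ j : Fin N, f j :=
          Finset.sum_le_sum_of_subset_of_nonneg (Finset.subset_univ _) fun j _ _ => hf j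
  have hrow : ∀ i, i < min M N → ∑ j ∈ Finset.range (min M N), S' i j ≤ 1 := by
    intro i hi
    rw [← Fin.sum_univ_eq_sum_range (fun j => S' i j) (min M N)]
    have heq : ∀ j : Fin (min M N), S' i (j : ℕ)
        = (Quaternion.normSq (A (Fin.castLE hKM ⟨i, hi⟩) (Fin.castLE hKM j))
          + Quaternion.normSq (B (Fin.castLE hKN j) (Fin.castLE hKN ⟨i, hi⟩))) / 2 := by
      intro j
      simp only [hS']
      rw [dif_pos ⟨hi, j.isLt⟩]
    rw [Finset.sum_congr rfl (fun j _ => heq j), ← Finset.sum_div, Finset.sum_add_distrib]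
    have h1 : ∑ j : Fin (min M N),
        Quaternion.normSq (A (Fin.castLE hKM ⟨i, hi⟩) (Fin.castLE hKM j)) ≤ 1 := by
      have := hAcast (Fin.castLE hKM ⟨i, hi⟩)
        (fun j => Quaternion.normSq (A (Fin.castLE hKM ⟨i, hi⟩) j))
        (fun j => Quaternion.normSq_nonneg)
      calc _ ≤ ∑ j : Fin M, Quaternion.normSq (A (Fin.castLE hKM ⟨i, hi⟩) j) := this
        _ = 1 := unitary_row_sum hAu _
    have h2 : ∑ j : Fin (min M N),
        Quaternion.normSq (B (Fin.castLE hKN j) (Fin.castLE hKN ⟨i, hi⟩)) ≤ 1 := by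
      have := hNcast (fun j => Quaternion.normSq (B j (Fin.castLE hKN ⟨i, hi⟩)))
        (fun j => Quaternion.normSq_nonneg)
      calc _ ≤ ∑ j : Fin N, Quaternion.normSq (B j (Fin.castLE hKN ⟨i, hi⟩)) := this
        _ = 1 := unitary_col_sum hBu _
    linarith
  have hcol : ∀ j, j < min M N → ∑ i ∈ Finset.range (min M N), S' i j ≤ 1 := by
    intro j hj
    rw [← Fin.sum_univ_eq_sum_range (fun i => S' i j) (min M N)]
    have heq : ∀ i : Fin (min M N), S' (i : ℕ) j
        = (Quaternion.normSq (A (Fin.castLE hKM i) (Fin.castLE hKM ⟨j, hj⟩))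
          + Quaternion.normSq (B (Fin.castLE hKN ⟨j, hj⟩) (Fin.castLE hKN i))) / 2 := by
      intro i
      simp only [hS']
      rw [dif_pos ⟨i.isLt, hj⟩]
    rw [Finset.sum_congr rfl (fun i _ => heq i), ← Finset.sum_div, Finset.sum_add_distrib]
    have h1 : ∑ i : Fin (min M N),
        Quaternion.normSq (A (Fin.castLE hKM i) (Fin.castLE hKM ⟨j, hj⟩)) ≤ 1 := by
      have := hAcast (Fin.castLE hKM ⟨j, hj⟩)
        (fun i => Quaternion.normSq (A i (Fin.castLE hKM ⟨j, hj⟩)))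
        (fun i => Quaternion.normSq_nonneg)
      calc _ ≤ ∑ i : Fin M, Quaternion.normSq (A i (Fin.castLE hKM ⟨j, hj⟩)) := this
        _ = 1 := unitary_col_sum hAu _
    have h2 : ∑ i : Fin (min M N),
        Quaternion.normSq (B (Fin.castLE hKN ⟨j, hj⟩) (Fin.castLE hKN i)) ≤ 1 := by
      have := hNcast (fun i => Quaternion.normSq (B (Fin.castLE hKN ⟨j, hj⟩) i))
        (fun i => Quaternion.normSq_nonneg)
      calc _ ≤ ∑ i : Fin N, Quaternion.normSq (B (Fin.castLE hKN ⟨j, hj⟩) i) := this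
        _ = 1 := unitary_row_sum hBu _
    linarith
  have happly := substochastic_sum_le (min M N) x' y' hx'anti hy'anti hx'K hy'K S'
    hS'0 hrow hcol
  calc (Matrix.trace (Yᴴ * X)).re
      ≤ ∑ i ∈ Finset.range (min M N), ∑ j ∈ Finset.range (min M N),
          y' i * x' j * S' i j := hstep
    _ ≤ ∑ i ∈ Finset.range (min M N), x' i * y' i := happly
    _ = ∑ i, x i * y i := by
        rw [← Fin.sum_univ_eq_sum_range (fun i => x' i * y' i) (min M N)]
        apply Finset.sum_congr rfl
        intro i _
        rw [hx'v i, hy'v i]
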